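/- Every quasi-uniform probability measure μ on [0,1] decomposes uniquely as μ = λ restricted to a closed set F plus a sum of point masses mᵢ δ_{xᵢ}, where the Gᵢ are the connected components of F^c, mᵢ is the length of Gᵢ, and xᵢ is one of the two endpoints of Gᵢ. -/

import Mathlib

open MeasureTheory

/-- A measure `μ` on `ℝ` (thought of as a probability measure on `[0,1]`) is quasi-uniform if
`μ {x ∈ [0,1] : μ[0,x) ≤ x ≤ μ[0,x]} = 1`. -/
def QuasiUniform (μ : Measure ℝ) : Prop :=
  μ {x : ℝ | x ∈ Set.Icc (0:ℝ) 1 ∧ μ (Set.Ico 0 x) ≤ ENNReal.ofReal x ∧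
      ENNReal.ofReal x ≤ μ (Set.Icc 0 x)} = 1

/-- `μ` decomposes over the closed set `F`: the complement `[0,1] \ F` is a countable disjoint
union of open intervals `(aᵢ, bᵢ)` (its connected components), `xᵢ` is one of the two endpoints
of the `i`-th interval, and `μ = λ|_F + Σᵢ (bᵢ - aᵢ) δ_{xᵢ}`. -/
def IsQuasiUniformDecomposition (μ : Measure ℝ) (F : Set ℝ) : Prop :=
  IsClosed F ∧ F ⊆ Set.Icc 0 1 ∧
    ∃ (ι : Type) (_ : Countable ι) (a b x : ι → ℝ),
      (∀ i, a i < b i) ∧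
      (Pairwise fun i j => Disjoint (Set.Ioo (a i) (b i)) (Set.Ioo (a j) (b j))) ∧
      Set.Icc (0:ℝ) 1 \ F = (⋃ i, Set.Ioo (a i) (b i)) ∧
      (∀ i, x i = a i ∨ x i = b i) ∧
      μ = volume.restrict F +
            Measure.sum fun i => ENNReal.ofReal (b i - a i) • Measure.dirac (x i)

namespace QUProof
open Set
open scoped ENNReal
attribute [local instance] Classical.propDecidable
set_option linter.unusedSectionVars false
set_option maxHeartbeats 1000000


open Set


def Sset (μ : Measure ℝ) : Set ℝ :=
  {t : ℝ | t ∈ Icc (0:ℝ) 1 ∧ μ (Iio t) ≤ ENNReal.ofReal t ∧ ENNReal.ofReal t ≤ μ (Iic t)}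

section Limits

variable (μ : Measure ℝ)

lemma measure_Iic_iInf [IsFiniteMeasure μ] (t : ℝ) :
    μ (Iic t) = ⨅ n : ℕ, μ (Iic (t + 1/(n+1))) := by
  have h1 : ⋂ n : ℕ, Iic (t + 1/(n+1)) = Iic t := by
    ext y
    simp only [mem_iInter, mem_Iic]
    constructor
    · intro h
      by_contra hy
      push_neg at hy
      obtain ⟨n, hn⟩ := exists_nat_one_div_lt (sub_pos.mpr hy)
      linarith [h n]
    · intro h n
      have : (0:ℝ) < 1/(n+1) := by positivity
      linarith
  rw [← h1]
  refine Antitone.measure_iInter ?_ (fun n => nullMeasurableSet_Iic) ⟨0, measure_ne_top _ _⟩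
  intro m n hmn
  apply Iic_subset_Iic.mpr
  have : (1:ℝ)/(n+1) ≤ 1/(m+1) := by
    apply one_div_le_one_div_of_le (by positivity)
    exact_mod_cast by exact_mod_cast Nat.add_le_add_right hmn 1
  linarith

lemma measure_Iio_iSup (t : ℝ) :
    μ (Iio t) = ⨆ n : ℕ, μ (Iic (t - 1/(n+1))) := by
  have h1 : ⋃ n : ℕ, Iic (t - 1/(n+1)) = Iio t := by
    ext y
    simp only [mem_iUnion, mem_Iic, mem_Iio]
    constructor
    · rintro ⟨n, hn⟩
      have : (0:ℝ) < 1/(n+1) := by positivity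
      linarith
    · intro h
      obtain ⟨n, hn⟩ := exists_nat_one_div_lt (sub_pos.mpr h)
      exact ⟨n, by linarith⟩
  rw [← h1]
  refine Monotone.measure_iUnion ?_
  intro m n hmn
  apply Iic_subset_Iic.mpr
  have : (1:ℝ)/(n+1) ≤ 1/(m+1) := by
    apply one_div_le_one_div_of_le (by positivity)
    exact_mod_cast by exact_mod_cast Nat.add_le_add_right hmn 1
  linarith

lemma isClosed_Sset [IsFiniteMeasure μ] : IsClosed (Sset μ) := by
  have h1 : IsClosed {t : ℝ | μ (Iio t) ≤ ENNReal.ofReal t} := by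
    have he : {t : ℝ | μ (Iio t) ≤ ENNReal.ofReal t}
        = ⋂ q : ℚ, ({t : ℝ | t ≤ (q:ℝ)} ∪ {t : ℝ | μ (Iic (q:ℝ)) ≤ ENNReal.ofReal t}) := by
      ext t
      simp only [mem_iInter, mem_union, mem_setOf_eq]
      constructor
      · intro h q
        rcases le_or_gt t q with h'|h'
        · exact Or.inl h'
        · exact Or.inr (le_trans (measure_mono (Iic_subset_Iio.mpr h')) h)
      · intro h
        rw [measure_Iio_iSup]
        refine iSup_le fun n => ?_
        have hp : (0:ℝ) < 1/(n+1) := by positivity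
        obtain ⟨q, hq1, hq2⟩ := exists_rat_btwn (show t - 1/(n+1) < t by linarith)
        rcases h q with h'|h'
        · exact absurd h' (not_le.mpr hq2)
        · exact le_trans (measure_mono (Iic_subset_Iic.mpr hq1.le)) h'
    rw [he]
    refine isClosed_iInter fun q => IsClosed.union isClosed_Iic ?_
    exact IsClosed.preimage ENNReal.continuous_ofReal isClosed_Ici
  have h2 : IsClosed {t : ℝ | ENNReal.ofReal t ≤ μ (Iic t)} := by
    have he : {t : ℝ | ENNReal.ofReal t ≤ μ (Iic t)}
        = ⋂ q : ℚ, ({t : ℝ | (q:ℝ) ≤ t} ∪ {t : ℝ | ENNReal.ofReal t ≤ μ (Iic (q:ℝ))}) := by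
      ext t
      simp only [mem_iInter, mem_union, mem_setOf_eq]
      constructor
      · intro h q
        rcases le_or_gt (q:ℝ) t with h'|h'
        · exact Or.inl h'
        · exact Or.inr (le_trans h (measure_mono (Iic_subset_Iic.mpr h'.le)))
      · intro h
        rw [measure_Iic_iInf]
        refine le_iInf fun n => ?_
        have hp : (0:ℝ) < 1/(n+1) := by positivity
        obtain ⟨q, hq1, hq2⟩ := exists_rat_btwn (show t < t + 1/(n+1) by linarith)
        rcases h q with h'|h'
        · exact absurd h' (not_le.mpr hq1)
        · exact le_trans h' (measure_mono (Iic_subset_Iic.mpr hq2.le))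
    rw [he]
    refine isClosed_iInter fun q => IsClosed.union isClosed_Ici ?_
    exact IsClosed.preimage ENNReal.continuous_ofReal isClosed_Iic
  have hs : Sset μ = Icc 0 1 ∩ ({t : ℝ | μ (Iio t) ≤ ENNReal.ofReal t}
      ∩ {t : ℝ | ENNReal.ofReal t ≤ μ (Iic t)}) := by
    ext t
    simp only [Sset, mem_inter_iff, mem_setOf_eq]
  rw [hs]
  exact isClosed_Icc.inter (h1.inter h2)

end Limits



section Decomp

variable {ι : Type} [Countable ι] {F : Set ℝ} {a b x : ι → ℝ}

/-- If the left endpoint of interval `i` lies inside interval `j`, the intervals overlap. -/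
lemma left_endpoint_not_mem
    (hab : ∀ i, a i < b i)
    (hdisj : Pairwise fun i j => Disjoint (Set.Ioo (a i) (b i)) (Set.Ioo (a j) (b j)))
    (i j : ι) : a i ∉ Ioo (a j) (b j) := by
  intro h
  have hij : i = j := by
    by_contra hne
    have hd := hdisj hne
    set w := (a i + min (b i) (b j))/2 with hw
    have h1 : a i < min (b i) (b j) := lt_min (hab i) h.2
    have hwi : w ∈ Ioo (a i) (b i) := ⟨by simp [hw]; linarith,
      by simp only [hw]; have := min_le_left (b i) (b j); linarith⟩
    have hwj : w ∈ Ioo (a j) (b j) := ⟨by simp only [hw]; nlinarith [h.1],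
      by simp only [hw]; have := min_le_right (b i) (b j); linarith⟩
    exact (hd.ne_of_mem hwi hwj) rfl
  subst hij
  exact lt_irrefl _ h.1

lemma right_endpoint_not_mem
    (hab : ∀ i, a i < b i)
    (hdisj : Pairwise fun i j => Disjoint (Set.Ioo (a i) (b i)) (Set.Ioo (a j) (b j)))
    (i j : ι) : b i ∉ Ioo (a j) (b j) := by
  intro h
  have hij : i = j := by
    by_contra hne
    have hd := hdisj hne
    set w := (max (a i) (a j) + b i)/2 with hw
    have h1 : max (a i) (a j) < b i := max_lt (hab i) h.1
    have hwi : w ∈ Ioo (a i) (b i) := ⟨by simp only [hw]; have := le_max_left (a i) (a j); linarith,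
      by simp only [hw]; linarith⟩
    have hwj : w ∈ Ioo (a j) (b j) := ⟨by simp only [hw]; have := le_max_right (a i) (a j); linarith,
      by simp only [hw]; nlinarith [h.2]⟩
    exact (hd.ne_of_mem hwi hwj) rfl
  subst hij
  exact lt_irrefl _ h.2

lemma eq_of_left_eq
    (hab : ∀ i, a i < b i)
    (hdisj : Pairwise fun i j => Disjoint (Set.Ioo (a i) (b i)) (Set.Ioo (a j) (b j)))
    (i j : ι) (h : a i = a j) : i = j := by
  by_contra hne
  have hd := hdisj hne
  have h1 : a i < min (b i) (b j) := lt_min (hab i) (h ▸ hab j)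
  set w := (a i + min (b i) (b j))/2 with hw
  have hwi : w ∈ Ioo (a i) (b i) := ⟨by simp only [hw]; linarith,
    by simp only [hw]; have := min_le_left (b i) (b j); linarith⟩
  have hwj : w ∈ Ioo (a j) (b j) := ⟨by simp only [hw, ← h]; linarith,
    by simp only [hw]; have := min_le_right (b i) (b j); linarith⟩
  exact (hd.ne_of_mem hwi hwj) rfl

lemma Ioo_subset_Icc01
    (hcover : Icc (0:ℝ) 1 \ F = (⋃ i, Ioo (a i) (b i))) (i : ι) :
    Ioo (a i) (b i) ⊆ Icc (0:ℝ) 1 \ F :=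
  hcover ▸ subset_iUnion (fun i => Ioo (a i) (b i)) i

lemma endpoints_mem_Icc
    (hab : ∀ i, a i < b i)
    (hcover : Icc (0:ℝ) 1 \ F = (⋃ i, Ioo (a i) (b i))) (i : ι) :
    a i ∈ Icc (0:ℝ) 1 ∧ b i ∈ Icc (0:ℝ) 1 := by
  have h1 : Icc (a i) (b i) ⊆ Icc (0:ℝ) 1 := by
    rw [← closure_Ioo (hab i).ne]
    exact closure_minimal (fun y hy => (Ioo_subset_Icc01 hcover i hy).1) isClosed_Icc
  exact ⟨h1 ⟨le_refl _, (hab i).le⟩, h1 ⟨(hab i).le, le_refl _⟩⟩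

lemma endpoints_mem
    (hab : ∀ i, a i < b i)
    (hdisj : Pairwise fun i j => Disjoint (Set.Ioo (a i) (b i)) (Set.Ioo (a j) (b j)))
    (hcover : Icc (0:ℝ) 1 \ F = (⋃ i, Ioo (a i) (b i))) (i : ι) :
    a i ∈ F ∧ b i ∈ F := by
  have hicc := endpoints_mem_Icc hab hcover i
  constructor
  · by_contra hF
    have : a i ∈ Icc (0:ℝ) 1 \ F := ⟨hicc.1, hF⟩
    rw [hcover] at this
    obtain ⟨j, hj⟩ := mem_iUnion.mp this
    exact left_endpoint_not_mem hab hdisj i j hj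
  · by_contra hF
    have : b i ∈ Icc (0:ℝ) 1 \ F := ⟨hicc.2, hF⟩
    rw [hcover] at this
    obtain ⟨j, hj⟩ := mem_iUnion.mp this
    exact right_endpoint_not_mem hab hdisj i j hj

lemma noStraddle
    (hcover : Icc (0:ℝ) 1 \ F = (⋃ i, Ioo (a i) (b i)))
    {t : ℝ} (ht : t ∈ F) (i : ι) : ¬ (a i < t ∧ t < b i) := by
  intro hti
  exact (Ioo_subset_Icc01 hcover i ⟨hti.1, hti.2⟩).2 ht

/-- Evaluation of the decomposition measure on a measurable set. -/
lemma rhs_apply {s : Set ℝ} (hs : MeasurableSet s) :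
    (volume.restrict F + Measure.sum fun i =>
        ENNReal.ofReal (b i - a i) • Measure.dirac (x i)) s
      = volume (s ∩ F) + ∑' i, (if x i ∈ s then ENNReal.ofReal (b i - a i) else 0) := by
  classical
  rw [Measure.add_apply, Measure.restrict_apply hs, Measure.sum_apply _ hs]
  congr 1
  refine tsum_congr fun i => ?_
  rw [Measure.smul_apply, Measure.dirac_apply' _ hs, smul_eq_mul]
  by_cases h : x i ∈ s <;> simp [Set.indicator, h]

/-- Partition of `[0,t]` by `F` and the intervals, for `t ∈ F`. -/
lemma partition
    (hab : ∀ i, a i < b i)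
    (hdisj : Pairwise fun i j => Disjoint (Set.Ioo (a i) (b i)) (Set.Ioo (a j) (b j)))
    (hFsub : F ⊆ Icc 0 1)
    (hcover : Icc (0:ℝ) 1 \ F = (⋃ i, Ioo (a i) (b i)))
    {t : ℝ} (ht : t ∈ F) :
    volume (F ∩ Icc 0 t) + ∑' i, (if b i ≤ t then ENNReal.ofReal (b i - a i) else 0)
      = ENNReal.ofReal t := by
  classical
  have htIcc := hFsub ht
  have hset : Icc (0:ℝ) t = (F ∩ Icc 0 t) ∪ ⋃ i, (Ioo (a i) (b i) ∩ Icc 0 t) := by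
    ext z
    constructor
    · intro hz
      have hz1 : z ∈ Icc (0:ℝ) 1 := ⟨hz.1, le_trans hz.2 htIcc.2⟩
      by_cases hzF : z ∈ F
      · exact Or.inl ⟨hzF, hz⟩
      · have h2 : z ∈ Icc (0:ℝ) 1 \ F := ⟨hz1, hzF⟩
        rw [hcover] at h2
        obtain ⟨i, hi⟩ := mem_iUnion.mp h2
        exact Or.inr (mem_iUnion.mpr ⟨i, hi, hz⟩)
    · rintro (⟨-, hz⟩ | hz)
      · exact hz
      · obtain ⟨i, -, hz⟩ := mem_iUnion.mp hz
        exact hz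
  have hd2 : Disjoint (F ∩ Icc 0 t) (⋃ i, (Ioo (a i) (b i) ∩ Icc 0 t)) := by
    rw [disjoint_iUnion_right]
    intro i
    exact Disjoint.mono inter_subset_left inter_subset_left
      (disjoint_right.mpr fun z hz => (Ioo_subset_Icc01 hcover i hz).2)
  have hmU : MeasurableSet (⋃ i, (Ioo (a i) (b i) ∩ Icc (0:ℝ) t)) :=
    MeasurableSet.iUnion fun i => measurableSet_Ioo.inter measurableSet_Icc
  have h0 : ENNReal.ofReal t = volume (Icc (0:ℝ) t) := by rw [Real.volume_Icc, sub_zero]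
  have hU : volume (⋃ i, (Ioo (a i) (b i) ∩ Icc (0:ℝ) t))
      = ∑' i, volume (Ioo (a i) (b i) ∩ Icc (0:ℝ) t) :=
    measure_iUnion (fun i j hne => (hdisj hne).mono inter_subset_left inter_subset_left)
      (fun i => measurableSet_Ioo.inter measurableSet_Icc)
  have hR := (congrArg volume hset).trans ((measure_union hd2 hmU).trans (by rw [hU]))
  rw [h0, hR]
  congr 1
  refine tsum_congr fun i => ?_
  by_cases hbt : b i ≤ t
  · have h1 : Ioo (a i) (b i) ∩ Icc 0 t = Ioo (a i) (b i) := by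
      refine inter_eq_left.mpr fun y hy => ?_
      have h0a : (0:ℝ) ≤ a i := (endpoints_mem_Icc hab hcover i).1.1
      exact ⟨by linarith [hy.1], by linarith [hy.2]⟩
    rw [if_pos hbt, h1, Real.volume_Ioo]
  · have hta : t ≤ a i := by
      by_contra hc
      push_neg at hc
      exact (noStraddle hcover ht i) ⟨hc, lt_of_not_ge hbt⟩
    have h1 : Ioo (a i) (b i) ∩ Icc 0 t = ∅ := by
      refine eq_empty_of_forall_notMem fun y hy => ?_
      have := hy.1.1
      have := hy.2.2
      linarith
    rw [if_neg hbt, h1, measure_empty]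

end Decomp

section Decomp2
variable {ι : Type} [Countable ι] {F : Set ℝ} {a b x : ι → ℝ}


lemma F_inter_Iic (hFsub : F ⊆ Icc 0 1) (t : ℝ) : F ∩ Iic t = F ∩ Icc 0 t := by
  ext z
  simp only [mem_inter_iff, mem_Iic, mem_Icc]
  exact ⟨fun h => ⟨h.1, (hFsub h.1).1, h.2⟩, fun h => ⟨h.1, h.2.2⟩⟩

/-- The sum split: atoms up to `t` = full intervals up to `t` + possible interval claiming `t`. -/
lemma sum_split
    (hab : ∀ i, a i < b i)
    (hx : ∀ i, x i = a i ∨ x i = b i) (t : ℝ) :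
    ∑' i, (if x i ≤ t then ENNReal.ofReal (b i - a i) else 0)
      = (∑' i, (if b i ≤ t then ENNReal.ofReal (b i - a i) else 0))
        + ∑' i, (if x i ≤ t ∧ t < b i then ENNReal.ofReal (b i - a i) else 0) := by
  rw [← ENNReal.tsum_add]
  refine tsum_congr fun i => ?_
  rcases le_or_gt (b i) t with h|h
  · have hxt : x i ≤ t := by
      rcases hx i with h'|h' <;> rw [h']
      · exact le_trans (hab i).le h
      · exact h
    simp [h, hxt, not_lt.mpr h]
  · by_cases hxt : x i ≤ t <;> simp [hxt, h, not_le.mpr h]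

/-- Indices contributing to the extra sum must have `x i = a i = t`. -/
lemma extra_char
    (hab : ∀ i, a i < b i)
    (hcover : Icc (0:ℝ) 1 \ F = (⋃ i, Ioo (a i) (b i)))
    (hx : ∀ i, x i = a i ∨ x i = b i)
    {t : ℝ} (ht : t ∈ F) (i : ι) (h : x i ≤ t ∧ t < b i) : a i = t ∧ x i = a i := by
  have hxa : x i = a i := by
    rcases hx i with h'|h'
    · exact h'
    · exfalso; rw [h'] at h; exact absurd h.2 (not_lt.mpr h.1)
  have hat : a i ≤ t := hxa ▸ h.1
  rcases lt_or_eq_of_le hat with h'|h'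
  · exact absurd ⟨h', h.2⟩ (noStraddle hcover ht i)
  · exact ⟨h', hxa⟩

/-- Case (A): no interval claims `t` from the right. -/
lemma rhs_Iic_eq_A
    (hab : ∀ i, a i < b i)
    (hdisj : Pairwise fun i j => Disjoint (Set.Ioo (a i) (b i)) (Set.Ioo (a j) (b j)))
    (hFsub : F ⊆ Icc 0 1)
    (hcover : Icc (0:ℝ) 1 \ F = (⋃ i, Ioo (a i) (b i)))
    (hx : ∀ i, x i = a i ∨ x i = b i)
    {t : ℝ} (ht : t ∈ F) (hno : ∀ j, ¬(a j = t ∧ x j = a j)) :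
    volume (F ∩ Iic t) + ∑' i, (if x i ≤ t then ENNReal.ofReal (b i - a i) else 0)
      = ENNReal.ofReal t := by
  rw [F_inter_Iic hFsub, sum_split hab hx, ← add_assoc,
    partition hab hdisj hFsub hcover ht]
  have hz : ∀ i, (if x i ≤ t ∧ t < b i then ENNReal.ofReal (b i - a i) else 0) = 0 := by
    intro i
    rw [if_neg]
    intro h
    have := extra_char hab hcover hx ht i h
    exact hno i ⟨this.1, this.2.symm ▸ this.2⟩
  rw [tsum_congr hz, tsum_zero, add_zero]

/-- Case (B): interval `j` claims `t` from the right. -/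
lemma rhs_Iic_eq_B
    (hab : ∀ i, a i < b i)
    (hdisj : Pairwise fun i j => Disjoint (Set.Ioo (a i) (b i)) (Set.Ioo (a j) (b j)))
    (hFsub : F ⊆ Icc 0 1)
    (hcover : Icc (0:ℝ) 1 \ F = (⋃ i, Ioo (a i) (b i)))
    (hx : ∀ i, x i = a i ∨ x i = b i)
    {t : ℝ} (ht : t ∈ F) (j : ι) (hj : a j = t ∧ x j = a j) :
    volume (F ∩ Iic t) + ∑' i, (if x i ≤ t then ENNReal.ofReal (b i - a i) else 0)
      = ENNReal.ofReal (b j) := by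
  rw [F_inter_Iic hFsub]
  rw [sum_split hab hx]
  rw [← add_assoc]
  rw [partition hab hdisj hFsub hcover ht]
  have hterm : ∀ i, i ≠ j → (if x i ≤ t ∧ t < b i then ENNReal.ofReal (b i - a i) else 0) = 0 := by
    intro i hi
    rw [if_neg]
    intro h
    have hc := extra_char hab hcover hx ht i h
    exact hi (eq_of_left_eq hab hdisj i j (hc.1.trans hj.1.symm))
  have hE : (∑' i, (if x i ≤ t ∧ t < b i then ENNReal.ofReal (b i - a i) else 0))
      = (if x j ≤ t ∧ t < b j then ENNReal.ofReal (b j - a j) else 0) := tsum_eq_single j hterm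
  rw [hE, if_pos ⟨le_of_eq (hj.2.trans hj.1), hj.1 ▸ hab j⟩,
    ← ENNReal.ofReal_add (hFsub ht).1 (sub_nonneg.mpr (hab j).le)]
  congr 1
  rw [← hj.1]
  ring

/-- Lower bound for the decomposition measure of `Iic t`, `t ∈ F`. -/
lemma rhs_Iic_ge
    (hab : ∀ i, a i < b i)
    (hdisj : Pairwise fun i j => Disjoint (Set.Ioo (a i) (b i)) (Set.Ioo (a j) (b j)))
    (hFsub : F ⊆ Icc 0 1)
    (hcover : Icc (0:ℝ) 1 \ F = (⋃ i, Ioo (a i) (b i)))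
    (hx : ∀ i, x i = a i ∨ x i = b i)
    {t : ℝ} (ht : t ∈ F) :
    ENNReal.ofReal t
      ≤ volume (F ∩ Iic t) + ∑' i, (if x i ≤ t then ENNReal.ofReal (b i - a i) else 0) := by
  rw [F_inter_Iic hFsub, ← partition hab hdisj hFsub hcover ht]
  refine add_le_add le_rfl (ENNReal.tsum_le_tsum fun i => ?_)
  by_cases h : b i ≤ t
  · have hxt : x i ≤ t := by
      rcases hx i with h'|h' <;> rw [h']
      · exact le_trans (hab i).le h
      · exact h
    simp [h, hxt]
  · simp [h]

/-- Upper bound for the decomposition measure of `Iio t`, `t ∈ F`. -/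
lemma rhs_Iio_le
    (hab : ∀ i, a i < b i)
    (hdisj : Pairwise fun i j => Disjoint (Set.Ioo (a i) (b i)) (Set.Ioo (a j) (b j)))
    (hFsub : F ⊆ Icc 0 1)
    (hcover : Icc (0:ℝ) 1 \ F = (⋃ i, Ioo (a i) (b i)))
    (hx : ∀ i, x i = a i ∨ x i = b i)
    {t : ℝ} (ht : t ∈ F) :
    volume (F ∩ Iio t) + ∑' i, (if x i < t then ENNReal.ofReal (b i - a i) else 0)
      ≤ ENNReal.ofReal t := by
  rw [← partition hab hdisj hFsub hcover ht]
  refine add_le_add (measure_mono fun z hz => ⟨hz.1, (hFsub hz.1).1, le_of_lt hz.2⟩)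
    (ENNReal.tsum_le_tsum fun i => ?_)
  by_cases h : x i < t
  · have hbt : b i ≤ t := by
      rcases hx i with h'|h'
      · rw [h'] at h
        by_contra hc
        exact (noStraddle hcover ht i) ⟨h, lt_of_not_ge hc⟩
      · rw [h'] at h
        exact h.le
    simp [h, hbt]
  · simp [h]
end Decomp2
noncomputable section

def Uset (μ : Measure ℝ) : Set ℝ := Icc (0:ℝ) 1 \ Sset μ

def aa (μ : Measure ℝ) (t : ℝ) : ℝ := sSup (Icc 0 t \ Uset μ)
def bb (μ : Measure ℝ) (t : ℝ) : ℝ := sInf (Icc t 1 \ Uset μ)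

variable (μ : Measure ℝ) [IsProbabilityMeasure μ]

section Basic
variable (hsupp : μ (Set.Icc (0:ℝ) 1)ᶜ = 0)
include hsupp

lemma mIio0 : μ (Iio 0) = 0 :=
  measure_mono_null (fun y (hy : y < 0) => fun h : y ∈ Icc (0:ℝ) 1 => absurd h.1 (not_le.mpr hy))
    hsupp

lemma mIic_ge_one {t : ℝ} (ht : 1 ≤ t) : μ (Iic t) = 1 := by
  refine le_antisymm prob_le_one ?_
  have h1 : (univ : Set ℝ) ⊆ Iic t ∪ (Icc 0 1)ᶜ := by
    intro y _
    rcases le_or_gt y t with h|h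
    · exact Or.inl h
    · exact Or.inr fun hy : y ∈ Icc (0:ℝ) 1 => absurd hy.2 (not_le.mpr (lt_of_le_of_lt ht h))
  calc (1:ℝ≥0∞) = μ univ := (measure_univ).symm
    _ ≤ μ (Iic t ∪ (Icc 0 1)ᶜ) := measure_mono h1
    _ ≤ μ (Iic t) + μ (Icc 0 1)ᶜ := measure_union_le _ _
    _ = μ (Iic t) := by rw [hsupp, add_zero]

lemma zero_mem_Sset : 0 ∈ Sset μ :=
  ⟨⟨le_refl _, zero_le_one⟩, by rw [mIio0 μ hsupp]; exact zero_le,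
    by rw [ENNReal.ofReal_zero]; exact zero_le⟩

lemma one_mem_Sset : 1 ∈ Sset μ :=
  ⟨⟨zero_le_one, le_refl _⟩,
    by rw [ENNReal.ofReal_one]; exact prob_le_one,
    by rw [ENNReal.ofReal_one, mIic_ge_one μ hsupp (le_refl 1)]⟩

lemma Uset_subset : Uset μ ⊆ Ioo 0 1 := by
  intro t ht
  rcases lt_or_eq_of_le ht.1.1 with h|h
  · rcases lt_or_eq_of_le ht.1.2 with h'|h'
    · exact ⟨h, h'⟩
    · exact absurd (by rw [h']; exact one_mem_Sset μ hsupp) ht.2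
  · exact absurd (by rw [← h]; exact zero_mem_Sset μ hsupp) ht.2

lemma Uset_open : IsOpen (Uset μ) := by
  have h : Uset μ = Ioo 0 1 ∩ (Sset μ)ᶜ := by
    ext t
    exact ⟨fun ht => ⟨Uset_subset μ hsupp ht, ht.2⟩, fun ht => ⟨Ioo_subset_Icc_self ht.1, ht.2⟩⟩
  rw [h]
  exact isOpen_Ioo.inter (isClosed_Sset μ).isOpen_compl

variable {μ}

lemma aa_spec {t : ℝ} (ht : t ∈ Uset μ) : aa μ t ∈ Icc 0 t \ Uset μ := by
  have hcl : IsClosed (Icc 0 t \ Uset μ) := by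
    rw [diff_eq]
    exact isClosed_Icc.inter (Uset_open μ hsupp).isClosed_compl
  refine hcl.csSup_mem ⟨0, ⟨le_refl _, (Uset_subset μ hsupp ht).1.le⟩, fun h0 =>
    absurd (Uset_subset μ hsupp h0).1 (lt_irrefl 0)⟩ ⟨t, fun y hy => hy.1.2⟩

lemma bb_spec {t : ℝ} (ht : t ∈ Uset μ) : bb μ t ∈ Icc t 1 \ Uset μ := by
  have hcl : IsClosed (Icc t 1 \ Uset μ) := by
    rw [diff_eq]
    exact isClosed_Icc.inter (Uset_open μ hsupp).isClosed_compl
  refine hcl.csInf_mem ⟨1, ⟨(Uset_subset μ hsupp ht).2.le, le_refl _⟩, fun h1 =>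
    absurd (Uset_subset μ hsupp h1).2 (lt_irrefl 1)⟩ ⟨t, fun y hy => hy.1.1⟩

lemma aa_lt {t : ℝ} (ht : t ∈ Uset μ) : aa μ t < t :=
  lt_of_le_of_ne (aa_spec hsupp ht).1.2 (fun h => (aa_spec hsupp ht).2 (by rw [h]; exact ht))

lemma bb_gt {t : ℝ} (ht : t ∈ Uset μ) : t < bb μ t :=
  lt_of_le_of_ne (bb_spec hsupp ht).1.1 (fun h => (bb_spec hsupp ht).2 (by rw [← h]; exact ht))

lemma mem_U_of_btwn {t : ℝ} (ht : t ∈ Uset μ) : Ioo (aa μ t) (bb μ t) ⊆ Uset μ := by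
  intro y hy
  rcases le_or_gt y t with h|h
  · by_contra hyU
    have h0 : (0:ℝ) ≤ y := le_trans (aa_spec hsupp ht).1.1 hy.1.le
    have : y ≤ aa μ t := le_csSup ⟨t, fun z hz => hz.1.2⟩ ⟨⟨h0, h⟩, hyU⟩
    exact absurd hy.1 (not_lt.mpr this)
  · by_contra hyU
    have h1 : y ≤ 1 := le_trans hy.2.le (bb_spec hsupp ht).1.2
    have : bb μ t ≤ y := csInf_le ⟨t, fun z hz => hz.1.1⟩ ⟨⟨h.le, h1⟩, hyU⟩
    exact absurd hy.2 (not_lt.mpr this)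

lemma aa_bb_const {t w : ℝ} (ht : t ∈ Uset μ) (hw : w ∈ Ioo (aa μ t) (bb μ t)) :
    aa μ w = aa μ t ∧ bb μ w = bb μ t := by
  have hwU : w ∈ Uset μ := mem_U_of_btwn hsupp ht hw
  constructor
  · refine le_antisymm ?_ ?_
    · by_contra hc
      push_neg at hc
      have hmem : aa μ w ∈ Ioo (aa μ t) (bb μ t) :=
        ⟨hc, lt_of_le_of_lt (aa_spec hsupp hwU).1.2 hw.2⟩
      exact (aa_spec hsupp hwU).2 (mem_U_of_btwn hsupp ht hmem)
    · exact le_csSup ⟨w, fun z hz => hz.1.2⟩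
        ⟨⟨(aa_spec hsupp ht).1.1, hw.1.le⟩, (aa_spec hsupp ht).2⟩
  · refine le_antisymm ?_ ?_
    · exact csInf_le ⟨w, fun z hz => hz.1.1⟩
        ⟨⟨hw.2.le, (bb_spec hsupp ht).1.2⟩, (bb_spec hsupp ht).2⟩
    · by_contra hc
      push_neg at hc
      have hmem : bb μ w ∈ Ioo (aa μ t) (bb μ t) :=
        ⟨lt_of_lt_of_le hw.1 (bb_spec hsupp hwU).1.1, hc⟩
      exact (bb_spec hsupp hwU).2 (mem_U_of_btwn hsupp ht hmem)

end Basic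


section Comp

variable (μ : Measure ℝ) [IsProbabilityMeasure μ]

/-- The index set of components: pairs of endpoints. -/
def TT : Set (ℝ × ℝ) := {p | ∃ t ∈ Uset μ, p = (aa μ t, bb μ t)}

variable {μ}
variable (hsupp : μ (Set.Icc (0:ℝ) 1)ᶜ = 0)
include hsupp

lemma TT_lt (i : TT μ) : (i : ℝ × ℝ).1 < (i : ℝ × ℝ).2 := by
  obtain ⟨t, ht, hp⟩ := i.2
  rw [hp]
  exact lt_trans (aa_lt hsupp ht) (bb_gt hsupp ht)

lemma TT_disjoint : Pairwise fun (i j : TT μ) =>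
    Disjoint (Ioo (i : ℝ × ℝ).1 (i : ℝ × ℝ).2) (Ioo (j : ℝ × ℝ).1 (j : ℝ × ℝ).2) := by
  intro i j hne
  by_contra hd
  obtain ⟨w, hwi, hwj⟩ := Set.not_disjoint_iff.mp hd
  obtain ⟨u, hu, hpu⟩ := i.2
  obtain ⟨v, hv, hpv⟩ := j.2
  have hwi' : w ∈ Ioo (aa μ u) (bb μ u) := by rw [hpu] at hwi; exact hwi
  have hwj' : w ∈ Ioo (aa μ v) (bb μ v) := by rw [hpv] at hwj; exact hwj
  have h1 := aa_bb_const hsupp hu hwi'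
  have h2 := aa_bb_const hsupp hv hwj'
  apply hne
  apply Subtype.ext
  rw [hpu, hpv, Prod.mk.injEq]
  exact ⟨h1.1.symm.trans h2.1, h1.2.symm.trans h2.2⟩

lemma TT_cover : Icc (0:ℝ) 1 \ Sset μ = ⋃ i : TT μ, Ioo (i : ℝ × ℝ).1 (i : ℝ × ℝ).2 := by
  ext t
  constructor
  · intro ht
    exact mem_iUnion.mpr ⟨⟨(aa μ t, bb μ t), ⟨t, ht, rfl⟩⟩, aa_lt hsupp ht, bb_gt hsupp ht⟩
  · intro ht
    obtain ⟨i, hi⟩ := mem_iUnion.mp ht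
    obtain ⟨u, hu, hp⟩ := i.2
    rw [hp] at hi
    exact mem_U_of_btwn hsupp hu hi

lemma mem_S_of_notU {t : ℝ} (h1 : t ∈ Icc (0:ℝ) 1) (h2 : t ∉ Uset μ) : t ∈ Sset μ := by
  by_contra h
  exact h2 ⟨h1, h⟩

lemma TT_endpoints (i : TT μ) : (i : ℝ × ℝ).1 ∈ Sset μ ∧ (i : ℝ × ℝ).2 ∈ Sset μ := by
  obtain ⟨u, hu, hp⟩ := i.2
  have h0u : (0:ℝ) < u := (Uset_subset μ hsupp hu).1
  have hu1 : u < 1 := (Uset_subset μ hsupp hu).2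
  rw [hp]
  constructor
  · exact mem_S_of_notU hsupp ⟨(aa_spec hsupp hu).1.1, le_trans (aa_spec hsupp hu).1.2 hu1.le⟩
      (aa_spec hsupp hu).2
  · exact mem_S_of_notU hsupp ⟨le_trans h0u.le (bb_spec hsupp hu).1.1, (bb_spec hsupp hu).1.2⟩
      (bb_spec hsupp hu).2

lemma TT_countable : Countable (TT μ) := by
  have hex : ∀ i : TT μ, ∃ q : ℚ, (i : ℝ × ℝ).1 < (q:ℝ) ∧ ((q:ℝ) < (i : ℝ × ℝ).2) :=
    fun i => exists_rat_btwn (TT_lt hsupp i)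
  choose g hg using hex
  have hinj : Function.Injective g := by
    intro i j hij
    by_contra hne
    have hmi : ((g i : ℚ) : ℝ) ∈ Ioo (i : ℝ × ℝ).1 (i : ℝ × ℝ).2 := ⟨(hg i).1, (hg i).2⟩
    have hmj : ((g i : ℚ) : ℝ) ∈ Ioo (j : ℝ × ℝ).1 (j : ℝ × ℝ).2 := by
      rw [hij]
      exact ⟨(hg j).1, (hg j).2⟩
    exact Set.disjoint_left.mp (TT_disjoint hsupp hne) hmi hmj
  exact hinj.countable

lemma measure_Ico_eq_Iio (t : ℝ) : μ (Ico 0 t) = μ (Iio t) := by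
  refine le_antisymm (measure_mono fun z hz => hz.2) ?_
  have h1 : Iio t ⊆ Ico 0 t ∪ Iio 0 := by
    intro z hz
    rcases le_or_gt 0 z with h|h
    · exact Or.inl ⟨h, hz⟩
    · exact Or.inr h
  calc μ (Iio t) ≤ μ (Ico 0 t) + μ (Iio 0) := le_trans (measure_mono h1) (measure_union_le _ _)
    _ = μ (Ico 0 t) := by rw [mIio0 μ hsupp, add_zero]

lemma measure_Icc_eq_Iic (t : ℝ) : μ (Icc 0 t) = μ (Iic t) := by
  refine le_antisymm (measure_mono fun z hz => hz.2) ?_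
  have h1 : Iic t ⊆ Icc 0 t ∪ Iio 0 := by
    intro z hz
    rcases le_or_gt 0 z with h|h
    · exact Or.inl ⟨h, hz⟩
    · exact Or.inr h
  calc μ (Iic t) ≤ μ (Icc 0 t) + μ (Iio 0) := le_trans (measure_mono h1) (measure_union_le _ _)
    _ = μ (Icc 0 t) := by rw [mIio0 μ hsupp, add_zero]

variable (hQU : QuasiUniform μ)
include hQU

lemma mS : μ (Sset μ) = 1 := by
  have he : Sset μ = {x : ℝ | x ∈ Set.Icc (0:ℝ) 1 ∧ μ (Set.Ico 0 x) ≤ ENNReal.ofReal x ∧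
      ENNReal.ofReal x ≤ μ (Set.Icc 0 x)} := by
    ext t
    constructor
    · rintro ⟨h1, h2, h3⟩
      exact ⟨h1, by rw [measure_Ico_eq_Iio hsupp]; exact h2,
        by rw [measure_Icc_eq_Iic hsupp]; exact h3⟩
    · rintro ⟨h1, h2, h3⟩
      exact ⟨h1, by rw [← measure_Ico_eq_Iio hsupp]; exact h2,
        by rw [← measure_Icc_eq_Iic hsupp]; exact h3⟩
  rw [he]
  exact hQU

lemma mSc : μ (Sset μ)ᶜ = 0 := by
  rw [measure_compl (isClosed_Sset μ).measurableSet (measure_ne_top μ _), mS hsupp hQU,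
    measure_univ, tsub_self]

lemma comp_null (i : TT μ) : μ (Ioo (i : ℝ × ℝ).1 (i : ℝ × ℝ).2) = 0 := by
  refine measure_mono_null (fun z hz => ?_) (mSc hsupp hQU)
  have : z ∈ Icc (0:ℝ) 1 \ Sset μ := by
    rw [TT_cover hsupp]
    exact mem_iUnion.mpr ⟨i, hz⟩
  exact this.2

omit hQU in
lemma measure_Iic_between {α β y : ℝ} (hnull : μ (Ioo α β) = 0) (h1 : α ≤ y) (h2 : y < β) :
    μ (Iic y) = μ (Iic α) := by
  refine le_antisymm ?_ (measure_mono (Iic_subset_Iic.mpr h1))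
  have hs : Iic y ⊆ Iic α ∪ Ioo α β := by
    intro z hz
    rcases le_or_gt z α with h|h
    · exact Or.inl h
    · exact Or.inr ⟨h, lt_of_le_of_lt hz h2⟩
  calc μ (Iic y) ≤ μ (Iic α) + μ (Ioo α β) := le_trans (measure_mono hs) (measure_union_le _ _)
    _ = μ (Iic α) := by rw [hnull, add_zero]

/-- Dichotomy: at the left endpoint of a component, the CDF equals either endpoint. -/
lemma G_endpoint {u : ℝ} (hu : u ∈ Uset μ) :
    μ (Iic (aa μ u)) = ENNReal.ofReal (aa μ u) ∨
      μ (Iic (aa μ u)) = ENNReal.ofReal (bb μ u) := by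
  set α := aa μ u with hα
  set β := bb μ u with hβ
  have hα0 : 0 ≤ α := (aa_spec hsupp hu).1.1
  have hβ0 : 0 ≤ β := le_trans (Uset_subset μ hsupp hu).1.le (bb_spec hsupp hu).1.1
  have hαβ : α < β := lt_trans (aa_lt hsupp hu) (bb_gt hsupp hu)
  have hαS : α ∈ Sset μ := (TT_endpoints hsupp (⟨(α, β), ⟨u, hu, rfl⟩⟩ : TT μ)).1
  have hβS : β ∈ Sset μ := (TT_endpoints hsupp (⟨(α, β), ⟨u, hu, rfl⟩⟩ : TT μ)).2
  have hnull : μ (Ioo α β) = 0 := comp_null hsupp hQU (⟨(α, β), ⟨u, hu, rfl⟩⟩ : TT μ)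
  have h1 : ENNReal.ofReal α ≤ μ (Iic α) := hαS.2.2
  have h2 : μ (Iic α) ≤ ENNReal.ofReal β :=
    le_trans (measure_mono (Iic_subset_Iio.mpr hαβ)) hβS.2.1
  by_cases he : μ (Iic α) = ENNReal.ofReal α
  · exact Or.inl he
  right
  by_contra hne
  have hlt1 : ENNReal.ofReal α < μ (Iic α) := lt_of_le_of_ne h1 (Ne.symm he)
  have hlt2 : μ (Iic α) < ENNReal.ofReal β := lt_of_le_of_ne h2 hne
  set c := (μ (Iic α)).toReal with hc
  have hofc : ENNReal.ofReal c = μ (Iic α) := ENNReal.ofReal_toReal (measure_ne_top μ _)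
  have hαc : α < c := by
    have h := (ENNReal.toReal_lt_toReal ENNReal.ofReal_ne_top (measure_ne_top μ _)).mpr hlt1
    rwa [ENNReal.toReal_ofReal hα0] at h
  have hcβ : c < β := by
    have h := (ENNReal.toReal_lt_toReal (measure_ne_top μ _) ENNReal.ofReal_ne_top).mpr hlt2
    rwa [ENNReal.toReal_ofReal hβ0] at h
  have hcS : c ∈ Sset μ := by
    refine ⟨⟨le_trans hα0 hαc.le, le_trans hcβ.le (bb_spec hsupp hu).1.2⟩, ?_, ?_⟩
    · rw [measure_Iio_iSup]
      refine iSup_le fun n => ?_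
      have hp : (0:ℝ) < 1/(n+1) := by positivity
      rcases le_or_gt (c - 1/(n+1)) α with h|h
      · exact le_trans (measure_mono (Iic_subset_Iic.mpr h)) (le_of_eq hofc.symm)
      · exact le_of_eq ((measure_Iic_between hsupp hnull h.le
          (by linarith)).trans hofc.symm)
    · exact le_trans (le_of_eq hofc) (measure_mono (Iic_subset_Iic.mpr hαc.le))
  exact (mem_U_of_btwn hsupp hu ⟨hαc, hcβ⟩).2 hcS

end Comp


section Main

variable {μ : Measure ℝ} [IsProbabilityMeasure μ]

/-- The chosen endpoint carrying the point mass of component `i`. -/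
def xpt (μ : Measure ℝ) (i : TT μ) : ℝ :=
  if μ (Iic (i : ℝ × ℝ).1) = ENNReal.ofReal (i : ℝ × ℝ).1 then (i : ℝ × ℝ).2
  else (i : ℝ × ℝ).1

lemma xpt_eq_right {i : TT μ} (h : μ (Iic (i : ℝ × ℝ).1) = ENNReal.ofReal (i : ℝ × ℝ).1) :
    xpt μ i = (i : ℝ × ℝ).2 := by unfold xpt; rw [if_pos h]

lemma xpt_eq_left {i : TT μ} (h : ¬ μ (Iic (i : ℝ × ℝ).1) = ENNReal.ofReal (i : ℝ × ℝ).1) :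
    xpt μ i = (i : ℝ × ℝ).1 := by unfold xpt; rw [if_neg h]

lemma xpt_mem (i : TT μ) : xpt μ i = (i : ℝ × ℝ).1 ∨ xpt μ i = (i : ℝ × ℝ).2 := by
  unfold xpt
  split_ifs
  · exact Or.inr rfl
  · exact Or.inl rfl

variable (hsupp : μ (Set.Icc (0:ℝ) 1)ᶜ = 0) (hQU : QuasiUniform μ)
include hsupp

lemma xpt_mem_S (i : TT μ) : xpt μ i ∈ Sset μ := by
  rcases xpt_mem i with h'|h' <;> rw [h']
  · exact (TT_endpoints hsupp i).1
  · exact (TT_endpoints hsupp i).2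

include hQU

lemma main_S {t : ℝ} (ht : t ∈ Sset μ) :
    μ (Iic t) = volume (Sset μ ∩ Iic t)
      + ∑' i : TT μ, (if xpt μ i ≤ t
          then ENNReal.ofReal ((i : ℝ × ℝ).2 - (i : ℝ × ℝ).1) else 0) := by
  haveI := TT_countable hsupp
  have hab : ∀ i : TT μ, (i : ℝ × ℝ).1 < (i : ℝ × ℝ).2 := TT_lt hsupp
  have hdisj := TT_disjoint hsupp
  have hFsub : Sset μ ⊆ Icc 0 1 := fun z hz => hz.1
  have hcover := TT_cover hsupp
  have hx : ∀ i : TT μ, xpt μ i = (i : ℝ × ℝ).1 ∨ xpt μ i = (i : ℝ × ℝ).2 := xpt_mem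
  by_cases hG : μ (Iic t) = ENNReal.ofReal t
  · rw [hG]
    refine (rhs_Iic_eq_A hab hdisj hFsub hcover hx ht ?_).symm
    rintro j ⟨hj1, hj2⟩
    by_cases hc : μ (Iic (j : ℝ × ℝ).1) = ENNReal.ofReal (j : ℝ × ℝ).1
    · exact (hab j).ne' ((xpt_eq_right hc).symm.trans hj2)
    · exact hc (by rw [hj1]; exact hG)
  · have h0t : 0 ≤ t := ht.1.1
    have hle : ENNReal.ofReal t ≤ μ (Iic t) := ht.2.2
    have hlt : ENNReal.ofReal t < μ (Iic t) := lt_of_le_of_ne hle (Ne.symm hG)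
    set c := (μ (Iic t)).toReal with hcdef
    have hofc : ENNReal.ofReal c = μ (Iic t) := ENNReal.ofReal_toReal (measure_ne_top μ _)
    have htc : t < c := by
      have h := (ENNReal.toReal_lt_toReal ENNReal.ofReal_ne_top (measure_ne_top μ _)).mpr hlt
      rwa [ENNReal.toReal_ofReal h0t] at h
    have hc1 : c ≤ 1 := by
      have h := ENNReal.toReal_mono ENNReal.one_ne_top (prob_le_one (μ := μ) (s := Iic t))
      simpa using h
    set z := (t + c)/2 with hzdef
    have htz : t < z := by rw [hzdef]; linarith
    have hzc : z < c := by rw [hzdef]; linarith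
    have hbig : ∀ w, t < w → w ≤ z → w ∈ Uset μ := by
      intro w hw1 hw2
      refine ⟨⟨le_trans h0t hw1.le, by linarith⟩, fun hwS => ?_⟩
      have hIow : μ (Iic t) ≤ μ (Iio w) := measure_mono (Iic_subset_Iio.mpr hw1)
      have hwc : ENNReal.ofReal w < μ (Iio w) := by
        refine lt_of_lt_of_le ?_ hIow
        rw [← hofc, ENNReal.ofReal_lt_ofReal_iff (lt_of_le_of_lt h0t htc)]
        linarith
      exact absurd hwS.2.1 (not_le.mpr hwc)
    have hzU : z ∈ Uset μ := hbig z htz le_rfl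
    have haaz : aa μ z = t := by
      refine le_antisymm ?_ ?_
      · by_contra hcon
        push_neg at hcon
        exact (aa_spec hsupp hzU).2 (hbig _ hcon (aa_spec hsupp hzU).1.2)
      · exact le_csSup ⟨z, fun y hy => hy.1.2⟩ ⟨⟨h0t, htz.le⟩, fun hU => hU.2 ht⟩
    set j : TT μ := ⟨(aa μ z, bb μ z), ⟨z, hzU, rfl⟩⟩ with hjdef
    have haj : (j : ℝ × ℝ).1 = t := haaz
    have hxj : xpt μ j = (j : ℝ × ℝ).1 := by
      refine xpt_eq_left ?_
      intro hc
      rw [haj] at hc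
      exact hG hc
    have hGb : μ (Iic t) = ENNReal.ofReal (j : ℝ × ℝ).2 := by
      have hend := G_endpoint hsupp hQU hzU
      rw [haaz] at hend
      rcases hend with h|h
      · exact absurd h hG
      · exact h
    rw [hGb]
    exact (rhs_Iic_eq_B hab hdisj hFsub hcover hx ht j ⟨haj, hxj⟩).symm

lemma main_all (t : ℝ) :
    μ (Iic t) = volume (Sset μ ∩ Iic t)
      + ∑' i : TT μ, (if xpt μ i ≤ t
          then ENNReal.ofReal ((i : ℝ × ℝ).2 - (i : ℝ × ℝ).1) else 0) := by
  haveI := TT_countable hsupp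
  rcases lt_or_ge t 0 with h|h
  · have hL : μ (Iic t) = 0 :=
      measure_mono_null (fun z (hz : z ≤ t) => lt_of_le_of_lt hz h) (mIio0 μ hsupp)
    have h1 : Sset μ ∩ Iic t = ∅ :=
      eq_empty_of_forall_notMem fun z hz =>
        absurd (le_trans hz.1.1.1 hz.2) (not_le.mpr h)
    have h2 : ∀ i : TT μ, ¬ (xpt μ i ≤ t) := fun i hle =>
      absurd (le_trans (xpt_mem_S hsupp i).1.1 hle) (not_le.mpr h)
    have hsum : (∑' i : TT μ, (if xpt μ i ≤ t
        then ENNReal.ofReal ((i : ℝ × ℝ).2 - (i : ℝ × ℝ).1) else 0)) = 0 :=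
      (tsum_congr fun i => if_neg (h2 i)).trans tsum_zero
    rw [hL, h1, hsum, measure_empty, add_zero]
  rcases le_or_gt t 1 with h1|h1
  · by_cases hS : t ∈ Sset μ
    · exact main_S hsupp hQU hS
    · have htU : t ∈ Uset μ := ⟨⟨h, h1⟩, hS⟩
      have hαS : aa μ t ∈ Sset μ :=
        (TT_endpoints hsupp (⟨(aa μ t, bb μ t), ⟨t, htU, rfl⟩⟩ : TT μ)).1
      have hnull := comp_null hsupp hQU (⟨(aa μ t, bb μ t), ⟨t, htU, rfl⟩⟩ : TT μ)
      have hL : μ (Iic t) = μ (Iic (aa μ t)) :=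
        measure_Iic_between hsupp hnull (aa_lt hsupp htU).le (bb_gt hsupp htU)
      have hv : Sset μ ∩ Iic t = Sset μ ∩ Iic (aa μ t) := by
        ext z
        simp only [mem_inter_iff, mem_Iic]
        refine ⟨fun hz => ⟨hz.1, ?_⟩, fun hz => ⟨hz.1, le_trans hz.2 (aa_lt hsupp htU).le⟩⟩
        by_contra hc
        push_neg at hc
        exact (mem_U_of_btwn hsupp htU ⟨hc, lt_of_le_of_lt hz.2 (bb_gt hsupp htU)⟩).2 hz.1
      have hiff : ∀ i : TT μ, (xpt μ i ≤ t) ↔ (xpt μ i ≤ aa μ t) := by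
        intro i
        constructor
        · intro hle
          by_contra hc
          push_neg at hc
          exact (mem_U_of_btwn hsupp htU
            ⟨hc, lt_of_le_of_lt hle (bb_gt hsupp htU)⟩).2 (xpt_mem_S hsupp i)
        · intro hle
          exact le_trans hle (aa_lt hsupp htU).le
      rw [hL, hv, main_S hsupp hQU hαS]
      congr 1
      refine tsum_congr fun i => ?_
      by_cases hc : xpt μ i ≤ aa μ t
      · rw [if_pos hc, if_pos ((hiff i).mpr hc)]
      · rw [if_neg hc, if_neg (fun hle => hc ((hiff i).mp hle))]
  · have hL : μ (Iic t) = 1 := mIic_ge_one μ hsupp h1.le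
    have h1S : (1:ℝ) ∈ Sset μ := one_mem_Sset μ hsupp
    have hpart := partition (TT_lt hsupp) (TT_disjoint hsupp)
      (fun z (hz : z ∈ Sset μ) => hz.1) (TT_cover hsupp) h1S
    have hv : Sset μ ∩ Iic t = Sset μ ∩ Icc 0 1 := by
      ext z
      exact ⟨fun hz => ⟨hz.1, hz.1.1⟩, fun hz => ⟨hz.1, le_trans hz.1.1.2 h1.le⟩⟩
    have hsum : (∑' i : TT μ, (if xpt μ i ≤ t
          then ENNReal.ofReal ((i : ℝ × ℝ).2 - (i : ℝ × ℝ).1) else 0))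
        = ∑' i : TT μ, (if (i : ℝ × ℝ).2 ≤ 1
          then ENNReal.ofReal ((i : ℝ × ℝ).2 - (i : ℝ × ℝ).1) else 0) :=
      tsum_congr fun i => by
        rw [if_pos (le_trans (xpt_mem_S hsupp i).1.2 h1.le),
          if_pos (TT_endpoints hsupp i).2.1.2]
    calc μ (Iic t) = ENNReal.ofReal 1 := by rw [hL, ENNReal.ofReal_one]
      _ = volume (Sset μ ∩ Icc 0 1) + ∑' i : TT μ, (if (i : ℝ × ℝ).2 ≤ 1
            then ENNReal.ofReal ((i : ℝ × ℝ).2 - (i : ℝ × ℝ).1) else 0) := hpart.symm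
      _ = _ := by rw [hv, hsum]

lemma exists_decomp : IsQuasiUniformDecomposition μ (Sset μ) := by
  haveI := TT_countable hsupp
  refine ⟨isClosed_Sset μ, fun z hz => hz.1, ↥(TT μ), inferInstance,
    fun i => (i : ℝ × ℝ).1, fun i => (i : ℝ × ℝ).2, xpt μ,
    TT_lt hsupp, TT_disjoint hsupp, TT_cover hsupp, xpt_mem, ?_⟩
  refine Measure.ext_of_Iic μ _ fun t => ?_
  rw [rhs_apply measurableSet_Iic, Set.inter_comm (Iic t) (Sset μ)]
  simp only [Set.mem_Iic]
  exact main_all hsupp hQU t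

lemma decomp_unique {F : Set ℝ} (hF : IsQuasiUniformDecomposition μ F) : F = Sset μ := by
  obtain ⟨hFc, hFsub, ι, hcnt, a, b, x, hab, hdisj, hcover, hx, hμeq⟩ := hF
  haveI := hcnt
  have happly : ∀ s : Set ℝ, MeasurableSet s →
      μ s = volume (s ∩ F) + ∑' i, (if x i ∈ s then ENNReal.ofReal (b i - a i) else 0) := by
    intro s hs
    rw [hμeq]
    exact rhs_apply hs
  apply Set.Subset.antisymm
  · intro t ht
    refine ⟨hFsub ht, ?_, ?_⟩
    · rw [happly _ measurableSet_Iio]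
      have hb := rhs_Iio_le hab hdisj hFsub hcover hx ht
      rw [Set.inter_comm (Iio t) F]
      simpa only [Set.mem_Iio] using hb
    · rw [happly _ measurableSet_Iic]
      have hb := rhs_Iic_ge hab hdisj hFsub hcover hx ht
      rw [Set.inter_comm (Iic t) F]
      simpa only [Set.mem_Iic] using hb
  · intro p hp
    by_contra hpF
    have hpU : p ∈ Icc (0:ℝ) 1 \ F := ⟨hp.1, hpF⟩
    rw [hcover] at hpU
    obtain ⟨j, hj⟩ := mem_iUnion.mp hpU
    have haF : a j ∈ F := (endpoints_mem hab hdisj hcover j).1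
    have hnull : μ (Ioo (a j) (b j)) = 0 := by
      rw [happly _ measurableSet_Ioo]
      have h1 : Ioo (a j) (b j) ∩ F = ∅ :=
        eq_empty_of_forall_notMem fun z hz => (Ioo_subset_Icc01 hcover j hz.1).2 hz.2
      have h2 : ∀ i, x i ∉ Ioo (a j) (b j) := by
        intro i hxi
        have hxF : x i ∈ F := by
          rcases hx i with h'|h' <;> rw [h']
          · exact (endpoints_mem hab hdisj hcover i).1
          · exact (endpoints_mem hab hdisj hcover i).2
        exact (Ioo_subset_Icc01 hcover j hxi).2 hxF
      rw [h1, measure_empty, zero_add]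
      exact (tsum_congr fun i => if_neg (h2 i)).trans tsum_zero
    have hGp : μ (Iic p) = μ (Iic (a j)) := measure_Iic_between hsupp hnull hj.1.le hj.2
    have hup : μ (Iic (a j)) ≤ μ (Iio p) := measure_mono (Iic_subset_Iio.mpr hj.1)
    have hEq : ENNReal.ofReal p = μ (Iic (a j)) := by
      refine le_antisymm (hGp ▸ hp.2.2) (le_trans hup hp.2.1)
    have h0aj : 0 ≤ a j := (endpoints_mem_Icc hab hcover j).1.1
    have h0p : 0 ≤ p := le_trans h0aj hj.1.le
    have hμa : μ (Iic (a j)) = volume (F ∩ Iic (a j))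
        + ∑' i, (if x i ≤ a j then ENNReal.ofReal (b i - a i) else 0) := by
      rw [happly _ measurableSet_Iic, Set.inter_comm (Iic (a j)) F]
      simp only [Set.mem_Iic]
    by_cases hex : ∃ i, a i = a j ∧ x i = a i
    · obtain ⟨i, hi⟩ := hex
      have hij : i = j := eq_of_left_eq hab hdisj i j hi.1
      have hB := rhs_Iic_eq_B hab hdisj hFsub hcover hx haF i hi
      have hpb : ENNReal.ofReal p = ENNReal.ofReal (b i) := hEq.trans (hμa.trans hB)
      have h0b : 0 ≤ b i := (endpoints_mem_Icc hab hcover i).2.1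
      have : p = b i := (ENNReal.ofReal_eq_ofReal_iff h0p h0b).mp hpb
      rw [hij] at this
      exact absurd hj.2 (not_lt.mpr this.ge)
    · have hA := rhs_Iic_eq_A hab hdisj hFsub hcover hx haF
        (fun i hi => hex ⟨i, hi⟩)
      have hpa : ENNReal.ofReal p = ENNReal.ofReal (a j) := hEq.trans (hμa.trans hA)
      have : p = a j := (ENNReal.ofReal_eq_ofReal_iff h0p h0aj).mp hpa
      exact absurd hj.1 (not_lt.mpr this.le)

end Main

end
end QUProof

/-- Every quasi-uniform probability measure on `[0,1]` decomposes, uniquely (up to the labelling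
of the intervals), as Lebesgue measure restricted to a closed set `F` plus point masses `mᵢ δ_{xᵢ}`
where `mᵢ` is the length of the `i`-th component of `Fᶜ` and `xᵢ` one of its endpoints. -/
theorem quasiUniform_decomposition (μ : Measure ℝ) (hμ : IsProbabilityMeasure μ)
    (hsupp : μ (Set.Icc (0:ℝ) 1)ᶜ = 0) (hQU : QuasiUniform μ) :
    ∃! F : Set ℝ, IsQuasiUniformDecomposition μ F :=
  ⟨QUProof.Sset μ, QUProof.exists_decomp hsupp hQU,
    fun _F hF => QUProof.decomp_unique hsupp hQU hF⟩
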